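/- For all integers d ≥ 2 and 0 ≤ m ≤ n, the number f_d(n) of d-representable simplicial complexes on vertex set [n] satisfies f_d(n) ≥ f_{d−1}(m)^{n−m}. -/

import Mathlib

/-- `numRep d n` is the number f_d(n) of d-representable simplicial complexes on the
vertex set [n], i.e. of nerves of n-tuples of convex sets in ℝ^d. -/
noncomputable def numRep (d n : ℕ) : ℕ :=
  Set.ncard {K : Set (Finset (Fin n)) |
    ∃ C : Fin n → Set (Fin d → ℝ), (∀ i, Convex ℝ (C i)) ∧
      ∀ σ : Finset (Fin n), σ ∈ K ↔ (⋂ i ∈ σ, C i).Nonempty}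


open Set

/-- The set of d-representable complexes on [n]. -/
def nerves (d n : ℕ) : Set (Set (Finset (Fin n))) :=
  {K | ∃ C : Fin n → Set (Fin d → ℝ), (∀ i, Convex ℝ (C i)) ∧
      ∀ σ : Finset (Fin n), σ ∈ K ↔ (⋂ i ∈ σ, C i).Nonempty}

lemma empty_mem_nerves {d n : ℕ} {K : Set (Finset (Fin n))}
    (hK : K ∈ nerves d n) : (∅ : Finset (Fin n)) ∈ K := by
  obtain ⟨C, -, h⟩ := hK
  rw [h]
  simp

/-- A nonempty σ-indexed intersection of images under an injective map is nonempty iff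
the intersection of the originals is. -/
lemma inter_image_nonempty {α β γ : Type*} {f : α → β} (hf : Function.Injective f)
    {σ : Finset γ} (hσ : σ.Nonempty) (s : γ → Set α) :
    (⋂ i ∈ σ, f '' s i).Nonempty ↔ (⋂ i ∈ σ, s i).Nonempty := by
  constructor
  · rintro ⟨y, hy⟩
    simp only [Set.mem_iInter] at hy
    obtain ⟨i0, hi0⟩ := hσ
    obtain ⟨x, hx, hxy⟩ := hy i0 hi0
    refine ⟨x, ?_⟩
    simp only [Set.mem_iInter]
    intro i hi
    obtain ⟨x', hx', hxy'⟩ := hy i hi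
    rwa [← hf (hxy'.trans hxy.symm)]
  · rintro ⟨x, hx⟩
    simp only [Set.mem_iInter] at hx ⊢
    refine ⟨f x, ?_⟩
    simp only [Set.mem_iInter]
    exact fun i hi => ⟨x, hx i hi, rfl⟩

open scoped Classical in
/-- Any representable complex can be realized by convex sets inside a small ball. -/
lemma exists_small_real {e n' : ℕ} {K : Set (Finset (Fin n'))}
    (hK : K ∈ nerves e n') {ε : ℝ} (hε : 0 < ε) :
    ∃ D : Fin n' → Set (Fin e → ℝ), (∀ i, Convex ℝ (D i)) ∧
      (∀ i, D i ⊆ Metric.closedBall 0 ε) ∧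
      ∀ σ : Finset (Fin n'), σ ∈ K ↔ (⋂ i ∈ σ, D i).Nonempty := by
  obtain ⟨C, hconv, hC⟩ := hK
  set p : Finset (Fin n') → (Fin e → ℝ) := fun σ =>
    if h : (⋂ i ∈ σ, C i).Nonempty then h.choose else 0 with hp_def
  have hp : ∀ σ ∈ K, ∀ i ∈ σ, p σ ∈ C i := by
    intro σ hσ i hi
    have hne := (hC σ).1 hσ
    have h1 := hne.choose_spec
    simp only [Set.mem_iInter] at h1
    rw [hp_def]
    simp only [dif_pos hne]
    exact h1 i hi
  set R : ℝ := ∑ σ : Finset (Fin n'), ‖p σ‖ with hR_def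
  have hR : ∀ σ, ‖p σ‖ ≤ R :=
    fun σ => Finset.single_le_sum (f := fun σ => ‖p σ‖)
      (fun _ _ => norm_nonneg _) (Finset.mem_univ σ)
  have hR0 : (0:ℝ) ≤ R := le_trans (norm_nonneg _) (hR ∅)
  have hR1 : (0:ℝ) < R + 1 := by linarith
  set t : ℝ := ε / (R + 1) with ht_def
  have ht : 0 < t := div_pos hε hR1
  refine ⟨fun i => (fun x => t • x) '' (C i ∩ Metric.closedBall 0 (R + 1)),
    fun i => ((hconv i).inter (convex_closedBall _ _)).smul t, ?_, ?_⟩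
  · rintro i y ⟨x, ⟨-, hx⟩, rfl⟩
    rw [Metric.mem_closedBall, dist_zero_right] at hx ⊢
    calc ‖t • x‖ = t * ‖x‖ := by rw [norm_smul, Real.norm_of_nonneg ht.le]
    _ ≤ t * (R + 1) := by nlinarith
    _ = ε := by rw [ht_def, div_mul_cancel₀ _ hR1.ne']
  · intro σ
    rw [hC σ]
    rcases σ.eq_empty_or_nonempty with rfl | hσ
    · simp
    · rw [inter_image_nonempty (smul_right_injective _ ht.ne') hσ]
      constructor
      · rintro ⟨x, hx⟩
        simp only [Set.mem_iInter] at hx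
        have hxK : σ ∈ K := (hC σ).2 ⟨x, by simp only [Set.mem_iInter]; exact fun i hi => hx i hi⟩
        refine ⟨p σ, ?_⟩
        simp only [Set.mem_iInter, Set.mem_inter_iff]
        intro i hi
        exact ⟨hp σ hxK i hi, by
          rw [Metric.mem_closedBall, dist_zero_right]; linarith [hR σ]⟩
      · rintro ⟨x, hx⟩
        simp only [Set.mem_iInter, Set.mem_inter_iff] at hx
        exact ⟨x, by simp only [Set.mem_iInter]; exact fun i hi => (hx i hi).1⟩

open Set

section Geo

/-- center point of the w-th hyperplane: (W, 0,…,0, W²). -/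
def cpt (d : ℕ) (W : ℕ) : Fin d → ℝ := fun j =>
  if (j : ℕ) = 0 then (W : ℝ) else if (j : ℕ) = d - 1 then (W : ℝ)^2 else 0

/-- the linear functional x ↦ 2W·x₀ − x_{d−1} defining the w-th hyperplane. -/
noncomputable def fwL (d : ℕ) (hd : 2 ≤ d) (W : ℕ) : (Fin d → ℝ) →ₗ[ℝ] ℝ :=
  (2 * (W : ℝ)) • LinearMap.proj (⟨0, by omega⟩ : Fin d)
    - LinearMap.proj (⟨d - 1, by omega⟩ : Fin d)

/-- linear embedding of ℝ^{d−1} into the direction space of the w-th hyperplane. -/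
noncomputable def Lmap (d : ℕ) (hd : 2 ≤ d) (W : ℕ) : (Fin (d-1) → ℝ) →ₗ[ℝ] (Fin d → ℝ) :=
  LinearMap.pi (fun j => if h : (j : ℕ) < d - 1 then LinearMap.proj ⟨j, h⟩
    else (2 * (W : ℝ)) • LinearMap.proj (⟨0, by omega⟩ : Fin (d-1)))

variable {d : ℕ} (hd : 2 ≤ d)

lemma fwL_apply (W : ℕ) (x : Fin d → ℝ) :
    fwL d hd W x = 2 * (W : ℝ) * x ⟨0, by omega⟩ - x ⟨d - 1, by omega⟩ := by
  simp [fwL, smul_eq_mul]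

lemma Lmap_apply_lt (W : ℕ) (p : Fin (d-1) → ℝ) (j : Fin d) (h : (j : ℕ) < d - 1) :
    Lmap d hd W p j = p ⟨j, h⟩ := by
  simp only [Lmap, LinearMap.pi_apply, dif_pos h, LinearMap.proj_apply]

lemma Lmap_apply_last (W : ℕ) (p : Fin (d-1) → ℝ) :
    Lmap d hd W p ⟨d - 1, by omega⟩ = 2 * (W : ℝ) * p ⟨0, by omega⟩ := by
  simp only [Lmap, LinearMap.pi_apply]
  rw [dif_neg (by simp)]
  simp [smul_eq_mul]

lemma Lmap_inj (W : ℕ) : Function.Injective (Lmap d hd W) := by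
  intro p q h
  funext j
  have hj : (j : ℕ) < d := by omega
  have := congrFun h ⟨j, by omega⟩
  rwa [Lmap_apply_lt hd W p ⟨j, by omega⟩ j.isLt,
    Lmap_apply_lt hd W q ⟨j, by omega⟩ j.isLt] at this

lemma fwL_cpt (W W' : ℕ) :
    fwL d hd W (cpt d W') = 2 * (W : ℝ) * (W' : ℝ) - (W' : ℝ)^2 := by
  rw [fwL_apply]
  have h1 : cpt d W' ⟨0, by omega⟩ = (W' : ℝ) := by simp [cpt]
  have h2 : cpt d W' ⟨d - 1, by omega⟩ = (W' : ℝ)^2 := by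
    simp only [cpt]
    rw [if_neg (by omega)]
    simp
  rw [h1, h2]

lemma fwL_Lmap (W W' : ℕ) (p : Fin (d-1) → ℝ) :
    fwL d hd W (Lmap d hd W' p) = 2 * ((W : ℝ) - (W' : ℝ)) * p ⟨0, by omega⟩ := by
  rw [fwL_apply, Lmap_apply_lt hd W' p ⟨0, by omega⟩ (by show 0 < d - 1; omega), Lmap_apply_last hd W' p]
  ring

lemma Lmap_norm (W : ℕ) (p : Fin (d-1) → ℝ) :
    ‖Lmap d hd W p‖ ≤ (2 * (W : ℝ) + 2) * ‖p‖ := by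
  have hW : (0:ℝ) ≤ (W:ℝ) := Nat.cast_nonneg W
  have hp : (0:ℝ) ≤ ‖p‖ := norm_nonneg p
  rw [pi_norm_le_iff_of_nonneg (by positivity)]
  intro j
  by_cases h : (j : ℕ) < d - 1
  · rw [Lmap_apply_lt hd W p j h]
    calc ‖p ⟨j, h⟩‖ ≤ ‖p‖ := norm_le_pi_norm p _
    _ ≤ (2 * (W : ℝ) + 2) * ‖p‖ := by nlinarith
  · have hj : j = ⟨d - 1, by omega⟩ := by
      apply Fin.ext; have := j.isLt; simp; omega
    rw [hj, Lmap_apply_last hd W p]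
    have h0 : ‖p ⟨0, by omega⟩‖ ≤ ‖p‖ := norm_le_pi_norm p _
    rw [Real.norm_eq_abs, abs_mul, abs_of_nonneg (by positivity)]
    rw [Real.norm_eq_abs] at h0
    nlinarith

end Geo

section Geo2

variable {d : ℕ} (hd : 2 ≤ d)

/-- the affine image in the w-th hyperplane of a set in ℝ^{d-1}. -/
noncomputable def DdSet (d : ℕ) (hd : 2 ≤ d) (W : ℕ) (s : Set (Fin (d-1) → ℝ)) :
    Set (Fin d → ℝ) :=
  (fun p => cpt d W + Lmap d hd W p) '' s

lemma DdSet_convex {W : ℕ} {s : Set (Fin (d-1) → ℝ)} (hs : Convex ℝ s) :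
    Convex ℝ (DdSet d hd W s) := by
  have : DdSet d hd W s = (cpt d W + ·) '' ((Lmap d hd W) '' s) := by
    rw [Set.image_image]; rfl
  rw [this]
  exact (hs.linear_image (Lmap d hd W)).translate (cpt d W)

lemma DdSet_fw_eq {W : ℕ} {s : Set (Fin (d-1) → ℝ)} {x : Fin d → ℝ}
    (hx : x ∈ DdSet d hd W s) : fwL d hd W x = (W : ℝ)^2 := by
  obtain ⟨p, -, rfl⟩ := hx
  rw [map_add, fwL_cpt hd W W, fwL_Lmap hd W W p]
  ring

lemma DdSet_fw_lt {W W' : ℕ} (hWW' : W ≠ W') {s : Set (Fin (d-1) → ℝ)}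
    (hs : s ⊆ Metric.closedBall 0 (1/4)) {x : Fin d → ℝ}
    (hx : x ∈ DdSet d hd W' s) : fwL d hd W x < (W : ℝ)^2 := by
  obtain ⟨p, hp, rfl⟩ := hx
  rw [map_add, fwL_cpt hd W W', fwL_Lmap hd W W' p]
  have hp4 : ‖p‖ ≤ 1/4 := by
    have := hs hp; rwa [Metric.mem_closedBall, dist_zero_right] at this
  have hp0 : |p ⟨0, by omega⟩| ≤ 1/4 := by
    have := norm_le_pi_norm p ⟨0, by omega⟩
    rw [Real.norm_eq_abs] at this
    linarith
  set t := p ⟨0, by omega⟩ with ht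
  have habs := abs_le.1 hp0
  have hsep : (W : ℝ) - (W' : ℝ) ≤ -1 ∨ (1:ℝ) ≤ (W : ℝ) - (W' : ℝ) := by
    rcases lt_or_gt_of_ne hWW' with h | h
    · left
      have : (W : ℝ) + 1 ≤ (W' : ℝ) := by exact_mod_cast Nat.succ_le_of_lt h
      linarith
    · right
      have : (W' : ℝ) + 1 ≤ (W : ℝ) := by exact_mod_cast Nat.succ_le_of_lt h
      linarith
  rcases hsep with h | h
  · nlinarith
  · nlinarith

/-- radius of the w-th window. -/
noncomputable def rr (W : ℕ) : ℝ := (2 * (W : ℝ) + 2) / 4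

lemma DdSet_subset_ball {W : ℕ} {s : Set (Fin (d-1) → ℝ)}
    (hs : s ⊆ Metric.closedBall 0 (1/4)) :
    DdSet d hd W s ⊆ Metric.closedBall (cpt d W) (rr W) := by
  rintro x ⟨p, hp, rfl⟩
  have hp4 : ‖p‖ ≤ 1/4 := by
    have := hs hp; rwa [Metric.mem_closedBall, dist_zero_right] at this
  rw [Metric.mem_closedBall, dist_eq_norm]
  have : cpt d W + Lmap d hd W p - cpt d W = Lmap d hd W p := by abel
  rw [this]
  have h1 := Lmap_norm hd W p
  have hW : (0:ℝ) ≤ (W:ℝ) := Nat.cast_nonneg W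
  calc ‖Lmap d hd W p‖ ≤ (2 * (W : ℝ) + 2) * ‖p‖ := h1
  _ ≤ (2 * (W : ℝ) + 2) * (1/4) := by nlinarith [norm_nonneg p]
  _ = rr W := by rw [rr]; ring

/-- A face-slice lemma: the part of a convex hull of `A ∪ B` lying on a hyperplane that
contains `A` and has `B` strictly on one side is just `A`. -/
lemma face_slice {d : ℕ} {f : (Fin d → ℝ) →ₗ[ℝ] ℝ} {c : ℝ} {A B : Set (Fin d → ℝ)}
    (hA : Convex ℝ A) (hAf : ∀ x ∈ A, f x = c) (hB : ∀ x ∈ B, f x < c)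
    {x : Fin d → ℝ} (hx : x ∈ convexHull ℝ (A ∪ B)) (hxc : f x = c) : x ∈ A := by
  rcases B.eq_empty_or_nonempty with rfl | hBne
  · rwa [Set.union_empty, hA.convexHull_eq] at hx
  rcases A.eq_empty_or_nonempty with rfl | hAne
  · exfalso
    rw [Set.empty_union] at hx
    have : x ∈ {y : Fin d → ℝ | f y < c} :=
      convexHull_min hB (convex_halfSpace_lt f.isLinear c) hx
    simp only [Set.mem_setOf_eq] at this
    linarith
  rw [convexHull_union hAne hBne, mem_convexJoin] at hx
  obtain ⟨a, ha, b, hb, hseg⟩ := hx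
  rw [hA.convexHull_eq] at ha
  have hbf : f b < c := by
    have : b ∈ {y : Fin d → ℝ | f y < c} :=
      convexHull_min hB (convex_halfSpace_lt f.isLinear c) hb
    simpa using this
  obtain ⟨u, v, hu, hv, huv, rfl⟩ := hseg
  have hfx : u * f a + v * f b = c := by
    rw [← hxc, map_add, map_smul, map_smul, smul_eq_mul, smul_eq_mul]
  have hfa : f a = c := hAf a ha
  have h2 : v * (f b - c) = 0 := by
    linear_combination hfx - u * hfa - c * huv
  have hv0 : v = 0 := by
    rcases mul_eq_zero.1 h2 with h | h
    · exact h
    · exfalso; linarith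
  have hu1 : u = 1 := by linarith
  rw [hv0, hu1]
  simpa using ha

end Geo2

section Build

/-- The tuple of convex sets in ℝ^d realizing the combined complex. -/
noncomputable def buildC (d m n : ℕ) (hd : 2 ≤ d)
    (DD : Fin (n-m) → Fin m → Set (Fin (d-1) → ℝ)) : Fin n → Set (Fin d → ℝ) :=
  fun i =>
    if h : (i : ℕ) < m then
      convexHull ℝ (⋃ w : Fin (n-m), DdSet d hd (w : ℕ) (DD w ⟨i, h⟩))
    else
      Metric.closedBall (cpt d ((i:ℕ) - m)) (rr ((i:ℕ) - m)) ∩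
        {x | fwL d hd ((i:ℕ) - m) x = ((((i:ℕ) - m : ℕ)) : ℝ)^2}

lemma buildC_convex (d m n : ℕ) (hd : 2 ≤ d)
    (DD : Fin (n-m) → Fin m → Set (Fin (d-1) → ℝ)) (i : Fin n) :
    Convex ℝ (buildC d m n hd DD i) := by
  rw [buildC]
  by_cases h : (i : ℕ) < m
  · rw [dif_pos h]; exact convex_convexHull ℝ _
  · rw [dif_neg h]
    exact (convex_closedBall _ _).inter
      (convex_hyperplane (fwL d hd ((i:ℕ) - m)).isLinear _)

lemma buildC_emb (d m n : ℕ) (hd : 2 ≤ d) (hmn : m ≤ n)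
    (DD : Fin (n-m) → Fin m → Set (Fin (d-1) → ℝ)) (j : Fin m) :
    buildC d m n hd DD (Fin.castLE hmn j) =
      convexHull ℝ (⋃ w : Fin (n-m), DdSet d hd (w : ℕ) (DD w j)) := by
  have hj : ((Fin.castLE hmn j : Fin n) : ℕ) < m := j.isLt
  rw [buildC, dif_pos hj]
  have : (⟨((Fin.castLE hmn j : Fin n) : ℕ), hj⟩ : Fin m) = j := Fin.ext rfl
  rw [this]

lemma buildC_vtx (d m n : ℕ) (hd : 2 ≤ d)
    (DD : Fin (n-m) → Fin m → Set (Fin (d-1) → ℝ)) (w : Fin (n-m))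
    (hw : m + (w:ℕ) < n) :
    buildC d m n hd DD ⟨m + (w:ℕ), hw⟩ =
      Metric.closedBall (cpt d (w:ℕ)) (rr (w:ℕ)) ∩
        {x | fwL d hd (w:ℕ) x = ((w:ℕ) : ℝ)^2} := by
  rw [buildC, dif_neg (by simp)]
  have h2 : (m + (w:ℕ)) - m = (w:ℕ) := by omega
  simp only [h2]

lemma buildC_link (d m n : ℕ) (hd : 2 ≤ d) (hmn : m ≤ n)
    (DD : Fin (n-m) → Fin m → Set (Fin (d-1) → ℝ))
    (hconv : ∀ w i, Convex ℝ (DD w i))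
    (hball : ∀ w i, DD w i ⊆ Metric.closedBall 0 (1/4))
    (w : Fin (n-m)) (σ : Finset (Fin m)) :
    (⋂ i ∈ σ.map ⟨Fin.castLE hmn, Fin.castLE_injective hmn⟩ ∪
        {(⟨m + (w:ℕ), by have := w.isLt; omega⟩ : Fin n)},
      buildC d m n hd DD i).Nonempty ↔ (⋂ i ∈ σ, DD w i).Nonempty := by
  set W := (w : ℕ) with hW
  set emb : Fin m ↪ Fin n := ⟨Fin.castLE hmn, Fin.castLE_injective hmn⟩ with hemb
  set vtx : Fin n := ⟨m + W, by have := w.isLt; omega⟩ with hvtx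
  have hme : ∀ x : Fin d → ℝ,
      x ∈ ⋂ i ∈ σ.map emb ∪ {vtx}, buildC d m n hd DD i ↔
        ((∀ j ∈ σ, x ∈ buildC d m n hd DD (emb j)) ∧ x ∈ buildC d m n hd DD vtx) := by
    intro x
    simp only [Set.mem_iInter, Finset.mem_union, Finset.mem_map, Finset.mem_singleton]
    constructor
    · intro h
      exact ⟨fun j hj => h _ (Or.inl ⟨j, hj, rfl⟩), h _ (Or.inr rfl)⟩
    · rintro ⟨h1, h2⟩ i hi
      rcases hi with ⟨j, hj, rfl⟩ | rfl
      · exact h1 j hj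
      · exact h2
  have hv : ∀ j : Fin m, buildC d m n hd DD (emb j) =
      convexHull ℝ (⋃ w' : Fin (n-m), DdSet d hd (w' : ℕ) (DD w' j)) :=
    fun j => buildC_emb d m n hd hmn DD j
  have hwv : buildC d m n hd DD vtx =
      Metric.closedBall (cpt d W) (rr W) ∩ {x | fwL d hd W x = (W : ℝ)^2} :=
    buildC_vtx d m n hd DD w _
  constructor
  · rintro ⟨x, hx⟩
    obtain ⟨h1, h2⟩ := (hme x).1 hx
    rw [hwv] at h2
    have hfx : fwL d hd W x = (W : ℝ)^2 := h2.2
    have hD : ∀ j ∈ σ, x ∈ DdSet d hd W (DD w j) := by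
      intro j hj
      have hx1 : x ∈ convexHull ℝ (⋃ w' : Fin (n-m), DdSet d hd (w' : ℕ) (DD w' j)) := by
        rw [← hv j]; exact h1 j hj
      have hsplit : (⋃ w' : Fin (n-m), DdSet d hd (w' : ℕ) (DD w' j)) =
          DdSet d hd W (DD w j) ∪
            (⋃ w' : Fin (n-m), ⋃ _ : w' ≠ w, DdSet d hd (w' : ℕ) (DD w' j)) := by
        ext y
        simp only [Set.mem_iUnion, Set.mem_union]
        constructor
        · rintro ⟨w', hy⟩
          by_cases hww : w' = w
          · subst hww; exact Or.inl hy
          · exact Or.inr ⟨w', hww, hy⟩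
        · rintro (hy | ⟨w', -, hy⟩)
          · exact ⟨w, hy⟩
          · exact ⟨w', hy⟩
      rw [hsplit] at hx1
      refine face_slice (DdSet_convex hd (hconv w j))
        (fun y hy => DdSet_fw_eq hd hy) ?_ hx1 hfx
      intro y hy
      simp only [Set.mem_iUnion] at hy
      obtain ⟨w', hne, hy⟩ := hy
      exact DdSet_fw_lt hd (fun hh => hne (Fin.ext (by omega))) (hball w' j) hy
    rcases σ.eq_empty_or_nonempty with rfl | hσ
    · exact ⟨0, by simp⟩
    · have hinj : Function.Injective (fun p => cpt d W + Lmap d hd W p) :=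
        fun p q h => Lmap_inj hd W (by exact add_left_cancel h)
      refine (inter_image_nonempty hinj hσ (fun j => DD w j)).1 ?_
      exact ⟨x, by simp only [Set.mem_iInter]; exact fun j hj => hD j hj⟩
  · rintro ⟨y0, hy0⟩
    rcases σ.eq_empty_or_nonempty with rfl | hσ
    · refine ⟨cpt d W, (hme _).2 ⟨by simp, ?_⟩⟩
      rw [hwv]
      refine ⟨Metric.mem_closedBall_self (by rw [rr]; positivity), ?_⟩
      simp only [Set.mem_setOf_eq]
      rw [fwL_cpt hd W W]; ring
    · obtain ⟨j0, hj0⟩ := hσ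
      simp only [Set.mem_iInter] at hy0
      set x := cpt d W + Lmap d hd W y0 with hxdef
      have hxD : ∀ j ∈ σ, x ∈ DdSet d hd W (DD w j) := fun j hj => ⟨y0, hy0 j hj, rfl⟩
      refine ⟨x, (hme x).2 ⟨?_, ?_⟩⟩
      · intro j hj
        rw [hv j]
        exact subset_convexHull ℝ _ (Set.mem_iUnion.2 ⟨w, hxD j hj⟩)
      · rw [hwv]
        exact ⟨DdSet_subset_ball hd (hball w j0) (hxD j0 hj0),
          DdSet_fw_eq hd (hxD j0 hj0)⟩

end Build

/-- for d ≥ 2 and 0 ≤ m ≤ n, f_d(n) ≥ f_{d−1}(m)^{n−m}. -/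
theorem numRep_lower (d m n : ℕ) (hd : 2 ≤ d) (hmn : m ≤ n) :
    numRep (d - 1) m ^ (n - m) ≤ numRep d n := by
  classical
  have h1 : numRep (d - 1) m = (nerves (d-1) m).ncard := rfl
  have h2 : numRep d n = (nerves d n).ncard := rfl
  rw [h1, h2, ← Nat.card_coe_set_eq, ← Nat.card_coe_set_eq]
  have hchoice : ∀ K : nerves (d-1) m, ∃ D : Fin m → Set (Fin (d-1) → ℝ),
      (∀ i, Convex ℝ (D i)) ∧ (∀ i, D i ⊆ Metric.closedBall 0 (1/4)) ∧
      ∀ σ : Finset (Fin m), σ ∈ (K : Set (Finset (Fin m))) ↔ (⋂ i ∈ σ, D i).Nonempty :=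
    fun K => exists_small_real K.2 (by norm_num)
  choose D hDconv hDball hDnerve using hchoice
  set Φ : (Fin (n-m) → nerves (d-1) m) → Set (Finset (Fin n)) := fun g =>
    {σ | (⋂ i ∈ σ, buildC d m n hd (fun w => D (g w)) i).Nonempty} with hΦ
  have hΦmem : ∀ g, Φ g ∈ nerves d n := fun g =>
    ⟨buildC d m n hd (fun w => D (g w)), buildC_convex d m n hd _, fun σ => Iff.rfl⟩
  set Φ' : (Fin (n-m) → nerves (d-1) m) → nerves d n := fun g => ⟨Φ g, hΦmem g⟩ with hΦ'
  have hinj : Function.Injective Φ' := by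
    intro g g' hgg
    have hΦeq : Φ g = Φ g' := congrArg Subtype.val hgg
    funext w
    apply Subtype.ext
    ext σ
    exact (hDnerve (g w) σ).trans
      (((buildC_link d m n hd hmn (fun w' => D (g w')) (fun w' => hDconv (g w'))
          (fun w' => hDball (g w')) w σ).symm).trans
        ((Set.ext_iff.1 hΦeq _).trans
          ((buildC_link d m n hd hmn (fun w' => D (g' w')) (fun w' => hDconv (g' w'))
            (fun w' => hDball (g' w')) w σ).trans ((hDnerve (g' w) σ).symm))))
  calc Nat.card (nerves (d-1) m) ^ (n - m)
      = Nat.card (Fin (n-m) → nerves (d-1) m) := by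
        rw [Nat.card_fun, Nat.card_eq_fintype_card (α := Fin (n-m)), Fintype.card_fin]
    _ ≤ Nat.card (nerves d n) := Nat.card_le_card_of_injective Φ' hinj
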